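/- For the simplex potential Φ(x) = (n+1) log(1 + Σ e^{x_i}) − Σ x_i, the third derivatives satisfy Φ_{ijk} = Φ_{ik}δ_{ij} − Φ_{ik}(Φ_j+1)/(n+1) − Φ_{jk}(Φ_i+1)/(n+1). -/

import Mathlib

open Real

namespace Stmt7

variable {n : ℕ}

noncomputable def S (x : Fin n → ℝ) : ℝ := 1 + ∑ i, Real.exp (x i)

lemma S_pos (x : Fin n → ℝ) : 0 < S x :=
  lt_add_of_lt_of_nonneg one_pos (Finset.sum_nonneg fun i _ => (Real.exp_pos _).le)

noncomputable def P (x : Fin n → ℝ) (j : Fin n) : ℝ := Real.exp (x j) * (S x)⁻¹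

noncomputable def L (x : Fin n → ℝ) : (Fin n → ℝ) →L[ℝ] ℝ :=
  ∑ i, Real.exp (x i) • ContinuousLinearMap.proj i

lemma L_apply_single (x : Fin n → ℝ) (j : Fin n) : L x (Pi.single j 1) = Real.exp (x j) := by
  simp [L, ContinuousLinearMap.sum_apply, Pi.single_apply]

noncomputable def Phi (n : ℕ) : (Fin n → ℝ) → ℝ := fun x =>
  (n + 1) * Real.log (1 + ∑ i, Real.exp (x i)) - ∑ i, x i

lemma hexp (x : Fin n → ℝ) (i : Fin n) :
    HasFDerivAt (𝕜 := ℝ) (fun y : Fin n → ℝ => Real.exp (y i))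
      (Real.exp (x i) • ContinuousLinearMap.proj i) x :=
  by have := (Real.hasDerivAt_exp (x i)).comp_hasFDerivAt x (hasFDerivAt_apply (𝕜 := ℝ) i x); exact this

lemma hasFDerivAt_S (x : Fin n → ℝ) : HasFDerivAt (𝕜 := ℝ) (fun y => S (n := n) y) (L x) x :=
  (HasFDerivAt.fun_sum fun i _ => hexp x i).const_add 1

lemma contDiff_Phi : ContDiff ℝ ⊤ (Phi n) := by
  have hS : ContDiff ℝ ⊤ (fun x : Fin n → ℝ => 1 + ∑ i, Real.exp (x i)) :=
    contDiff_const.add (ContDiff.sum fun i _ =>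
      Real.contDiff_exp.comp (contDiff_apply ℝ ℝ i))
  exact (contDiff_const.mul (hS.log fun x => (S_pos x).ne')).sub
    (ContDiff.sum fun i _ => contDiff_apply ℝ ℝ i)

lemma hasFDerivAt_Phi (x : Fin n → ℝ) :
    HasFDerivAt (𝕜 := ℝ) (Phi n)
      (((n : ℝ) + 1) • ((S x)⁻¹ • L x) - ∑ i, ContinuousLinearMap.proj i) x := by
  exact (((Real.hasDerivAt_log (S_pos x).ne').comp_hasFDerivAt x (hasFDerivAt_S x)).const_mul
    _).sub (HasFDerivAt.fun_sum fun i _ => hasFDerivAt_apply (𝕜 := ℝ) i x)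

lemma phi1 (x : Fin n → ℝ) (j : Fin n) :
    fderiv ℝ (Phi n) x (Pi.single j 1) = ((n : ℝ) + 1) * P x j - 1 := by
  rw [(hasFDerivAt_Phi x).fderiv]
  simp [ContinuousLinearMap.sum_apply, L_apply_single, P, Pi.single_apply, mul_comm]

noncomputable def DP (x : Fin n → ℝ) (k : Fin n) : (Fin n → ℝ) →L[ℝ] ℝ :=
  Real.exp (x k) • ((-(S x ^ 2)⁻¹) • L x) + (S x)⁻¹ • (Real.exp (x k) • ContinuousLinearMap.proj k)

lemma hasFDerivAt_P (x : Fin n → ℝ) (k : Fin n) :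
    HasFDerivAt (𝕜 := ℝ) (fun y => P y k) (DP x k) x := by
  have h2 : HasFDerivAt (𝕜 := ℝ) (fun y : Fin n → ℝ => (S y)⁻¹) ((-(S x ^ 2)⁻¹) • L x) x :=
    (hasDerivAt_inv (S_pos x).ne').comp_hasFDerivAt x (hasFDerivAt_S x)
  exact (hexp x k).mul h2

lemma DP_single (x : Fin n → ℝ) (k j : Fin n) :
    DP x k (Pi.single j 1) = P x k * ((if j = k then 1 else 0) - P x j) := by
  have hS := (S_pos x).ne'
  simp only [DP, ContinuousLinearMap.add_apply, ContinuousLinearMap.smul_apply,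
    L_apply_single, ContinuousLinearMap.proj_apply, Pi.single_apply, smul_eq_mul, P]
  by_cases h : j = k
  · subst h; simp; field_simp; ring
  · simp [h, Ne.symm h]; field_simp

lemma phi2 (x : Fin n → ℝ) (j k : Fin n) :
    iteratedFDeriv ℝ 2 (Phi n) x ![Pi.single j 1, Pi.single k 1]
      = ((n : ℝ) + 1) * (P x k * ((if j = k then 1 else 0) - P x j)) := by
  rw [iteratedFDeriv_two_apply]
  simp only [Matrix.cons_val_zero, Matrix.cons_val_one, Matrix.head_cons]
  have hd : DifferentiableAt ℝ (fderiv ℝ (Phi n)) x :=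
    ((contDiff_Phi.fderiv_right (m := 1) le_top).differentiable one_ne_zero).differentiableAt
  have e1 : fderiv ℝ (fderiv ℝ (Phi n)) x (Pi.single j 1) (Pi.single k 1)
      = fderiv ℝ (fun y => fderiv ℝ (Phi n) y (Pi.single k 1)) x (Pi.single j 1) := by
    rw [fderiv_clm_apply hd (differentiableAt_const _)]
    simp
  rw [e1]
  have e2 : (fun y => fderiv ℝ (Phi n) y (Pi.single k 1))
      = fun y => ((n : ℝ) + 1) * P y k - 1 := funext fun y => phi1 y k
  rw [e2, (((hasFDerivAt_P x k).const_mul ((n : ℝ) + 1)).sub_const 1).fderiv]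
  simp [DP_single]

theorem main (x : Fin n → ℝ) (i j k : Fin n) :
    iteratedFDeriv ℝ 3 (Phi n) x ![Pi.single i 1, Pi.single j 1, Pi.single k 1]
      = iteratedFDeriv ℝ 2 (Phi n) x ![Pi.single i 1, Pi.single k 1] * (if i = j then 1 else 0)
        - iteratedFDeriv ℝ 2 (Phi n) x ![Pi.single i 1, Pi.single k 1]
            * (fderiv ℝ (Phi n) x (Pi.single j 1) + 1) / (n + 1)
        - iteratedFDeriv ℝ 2 (Phi n) x ![Pi.single j 1, Pi.single k 1]
            * (fderiv ℝ (Phi n) x (Pi.single i 1) + 1) / (n + 1) := by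
  have hd2 : DifferentiableAt ℝ (iteratedFDeriv ℝ 2 (Phi n)) x :=
    (contDiff_Phi.differentiable_iteratedFDeriv (by exact_mod_cast WithTop.coe_lt_top 2)).differentiableAt
  have e0 : iteratedFDeriv ℝ 3 (Phi n) x ![Pi.single i 1, Pi.single j 1, Pi.single k 1]
      = fderiv ℝ (fun y => iteratedFDeriv ℝ 2 (Phi n) y ![Pi.single j 1, Pi.single k 1]) x
          (Pi.single i 1) := by
    rw [iteratedFDeriv_succ_apply_left,
      fderiv_continuousMultilinear_apply_const_apply hd2 ![Pi.single j 1, Pi.single k 1]]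
    try congr 1
  rw [e0]
  have e2 : (fun y => iteratedFDeriv ℝ 2 (Phi n) y ![Pi.single j 1, Pi.single k 1])
      = fun y => ((n : ℝ) + 1) * (P y k * ((if j = k then 1 else 0) - P y j)) :=
    funext fun y => phi2 y j k
  rw [e2]
  have hh : HasFDerivAt (𝕜 := ℝ) (fun y => P y k * ((if j = k then (1:ℝ) else 0) - P y j))
      (P x k • (-DP x j) + ((if j = k then (1:ℝ) else 0) - P x j) • DP x k) x :=
    (hasFDerivAt_P x k).mul ((hasFDerivAt_P x j).const_sub _)
  rw [(hh.const_mul ((n : ℝ) + 1)).fderiv]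
  rw [phi1, phi1, phi2, phi2]
  have hne : ((n : ℝ) + 1) ≠ 0 := by positivity
  simp only [ContinuousLinearMap.smul_apply, ContinuousLinearMap.add_apply,
    ContinuousLinearMap.neg_apply, DP_single, smul_eq_mul,
    Matrix.cons_val_zero, Matrix.cons_val_one, Matrix.head_cons]
  field_simp
  by_cases hij : i = j <;> by_cases hjk : j = k
  · subst hij; subst hjk; simp; ring
  · subst hij; simp [hjk]; ring
  · subst hjk; simp [hij]; ring
  · by_cases hik : i = k
    · subst hik; simp [hij, hjk, Ne.symm hij]; ring
    · simp [hij, hjk, hik]; ring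

end Stmt7

theorem stmt_7 (n : ℕ) :
    let Φ : (Fin n → ℝ) → ℝ := fun x =>
      (n + 1) * Real.log (1 + ∑ i, Real.exp (x i)) - ∑ i, x i
    let Φ₁ : (Fin n → ℝ) → Fin n → ℝ := fun x i =>
      fderiv ℝ Φ x (Pi.single i 1)
    let Φ₂ : (Fin n → ℝ) → Fin n → Fin n → ℝ := fun x i j =>
      iteratedFDeriv ℝ 2 Φ x ![Pi.single i 1, Pi.single j 1]
    ∀ (x : Fin n → ℝ) (i j k : Fin n),
      iteratedFDeriv ℝ 3 Φ x ![Pi.single i 1, Pi.single j 1, Pi.single k 1]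
        = Φ₂ x i k * (if i = j then 1 else 0)
          - Φ₂ x i k * (Φ₁ x j + 1) / (n + 1)
          - Φ₂ x j k * (Φ₁ x i + 1) / (n + 1) := by
  intro Φ Φ₁ Φ₂ x i j k
  exact Stmt7.main x i j k
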